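/- arXiv:0911.3722 — 2 statements merged into one kernel-verified Lean document; each statement's English description precedes it below -/
import Mathlib

section
/- Every S-complete invariant ideal I on an amenable group G is N-complete; that is, if S_I = I then every subset A ⊆ G satisfying μ(A) = 0 for every Banach measure μ on G with I ⊆ N_μ belongs to I. -/
open scoped Pointwise Topology

/-- A subset `A` of a group `G` is *large* if `F * A = G` for some finite `F ⊆ G`. -/
def IsLarge {G : Type*} [Group G] (A : Set G) : Prop :=
  ∃ F : Finset G, (F : Set G) * A = Set.univ

/-- A subset `A` of a group `G` is *small* if `B \ A` is large for every large `B ⊆ G`. -/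
def IsSmallSet {G : Type*} [Group G] (A : Set G) : Prop :=
  ∀ B : Set G, IsLarge B → IsLarge (B \ A)

/-- A translation-invariant ideal on a group `G`: a proper family of subsets of `G`
containing the empty set, closed under subsets, finite unions and left translations. -/
structure IsInvariantIdeal (G : Type*) [Group G] (I : Set (Set G)) : Prop where
  proper : I ≠ Set.univ
  empty_mem : ∅ ∈ I
  subset_mem : ∀ ⦃A B : Set G⦄, A ∈ I → B ⊆ A → B ∈ I
  union_mem : ∀ ⦃A B : Set G⦄, A ∈ I → B ∈ I → A ∪ B ∈ I
  translate_mem : ∀ (x : G) ⦃A : Set G⦄, A ∈ I → (fun a => x * a) '' A ∈ I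

/-- A subset `A ⊆ G` is `I`-large if `G \ FA ∈ I` for some finite `F ⊆ G`. -/
def IsILarge {G : Type*} [Group G] (I : Set (Set G)) (A : Set G) : Prop :=
  ∃ F : Finset G, (Set.univ : Set G) \ ((F : Set G) * A) ∈ I

/-- A subset `A ⊆ G` is `I`-small if `L \ A` is `I`-large for every `I`-large `L ⊆ G`. -/
def IsISmall {G : Type*} [Group G] (I : Set (Set G)) (A : Set G) : Prop :=
  ∀ L : Set G, IsILarge I L → IsILarge I (L \ A)

/-- A *Banach measure* on a group `G`: a finitely additive, left-invariant probability
"measure" defined on all subsets of `G`, with values in `[0,1]`. -/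
structure BanachMeasure (G : Type*) [Group G] where
  toFun : Set G → ℝ
  nonneg : ∀ A : Set G, 0 ≤ toFun A
  le_one : ∀ A : Set G, toFun A ≤ 1
  additive : ∀ A B : Set G, Disjoint A B → toFun (A ∪ B) = toFun A + toFun B
  measure_univ : toFun Set.univ = 1
  invariant : ∀ (x : G) (A : Set G), toFun ((fun a => x * a) '' A) = toFun A

/-- The Følner condition: for every finite `F ⊆ G` and `ε > 0` there is a nonempty finite
`E ⊆ G` with `|E △ xE| < ε·|E|` for all `x ∈ F`.  A group is *amenable* iff it satisfies it. -/
def FolnerCond (G : Type*) [Group G] : Prop :=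
  ∀ (F : Finset G) (ε : ℝ), 0 < ε → ∃ E : Finset G, E.Nonempty ∧
    ∀ x ∈ F, ((symmDiff (E : Set G) ((fun a => x * a) '' (E : Set G))).ncard : ℝ) < ε * E.card

section AuxMeasure
open Filter
variable {G : Type*} [Group G]

/-- The `[0,1]`-valued indicator function of a set. -/
noncomputable def ind (S : Set G) (y : G) : ℝ := Set.indicator S (fun _ => (1:ℝ)) y

lemma ind_nonneg (S : Set G) (y : G) : 0 ≤ ind S y :=
  Set.indicator_nonneg (fun _ _ => zero_le_one) y

lemma ind_le_one (S : Set G) (y : G) : ind S y ≤ 1 := by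
  unfold ind
  by_cases h : y ∈ S
  · rw [Set.indicator_of_mem h]
  · rw [Set.indicator_of_notMem h]; exact zero_le_one

lemma ind_of_mem {S : Set G} {y : G} (h : y ∈ S) : ind S y = 1 := Set.indicator_of_mem h _

lemma ind_of_not_mem {S : Set G} {y : G} (h : y ∉ S) : ind S y = 0 :=
  Set.indicator_of_notMem h _

lemma ind_union {S T : Set G} (hd : Disjoint S T) (y : G) :
    ind (S ∪ T) y = ind S y + ind T y := by
  unfold ind
  rw [Set.indicator_union_of_disjoint hd]

lemma ind_image (x : G) (S : Set G) (y : G) :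
    ind ((fun a => x * a) '' S) y = ind S (x⁻¹ * y) := by
  have hiff : y ∈ (fun a => x * a) '' S ↔ x⁻¹ * y ∈ S := by
    constructor
    · rintro ⟨a, ha, rfl⟩; simpa using ha
    · intro h; exact ⟨x⁻¹ * y, h, by simp⟩
  by_cases h : x⁻¹ * y ∈ S
  · rw [ind_of_mem (hiff.2 h), ind_of_mem h]
  · rw [ind_of_not_mem (fun hy => h (hiff.1 hy)), ind_of_not_mem h]

lemma aux_sum_sub [DecidableEq G] (E₁ E₂ : Finset G) (f : G → ℝ)
    (h0 : ∀ a, 0 ≤ f a) (h1 : ∀ a, f a ≤ 1) :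
    (∑ e ∈ E₁, f e) - ∑ e ∈ E₂, f e ≤ ((symmDiff E₁ E₂).card : ℝ) := by
  rw [← Finset.sum_inter_add_sum_sdiff E₁ E₂ f, ← Finset.sum_inter_add_sum_sdiff E₂ E₁ f,
    Finset.inter_comm E₂ E₁]
  have b1 : ∑ e ∈ E₁ \ E₂, f e ≤ ((E₁ \ E₂).card : ℝ) := by
    calc ∑ e ∈ E₁ \ E₂, f e ≤ ∑ _e ∈ E₁ \ E₂, (1:ℝ) := Finset.sum_le_sum (fun i _ => h1 i)
      _ = ((E₁ \ E₂).card : ℝ) := by simp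
  have b2 : (0:ℝ) ≤ ∑ e ∈ E₂ \ E₁, f e := Finset.sum_nonneg fun i _ => h0 i
  have hc : ((E₁ \ E₂).card : ℝ) ≤ ((symmDiff E₁ E₂).card : ℝ) := by
    exact_mod_cast Finset.card_le_card (fun e he => Finset.mem_symmDiff.2
      (Or.inl ⟨(Finset.mem_sdiff.1 he).1, (Finset.mem_sdiff.1 he).2⟩))
  linarith

lemma aux_biUnion_mem {I : Set (Set G)} (hI : IsInvariantIdeal G I)
    (E : Finset G) (f : G → Set G) (hf : ∀ e ∈ E, f e ∈ I) :
    (⋃ e ∈ E, f e) ∈ I := by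
  classical
  induction E using Finset.induction_on with
  | empty => simpa using hI.empty_mem
  | insert _ _ hx ih =>
    rw [Finset.set_biUnion_insert]
    exact hI.union_mem (hf _ (Finset.mem_insert_self _ _))
      (ih fun e he => hf e (Finset.mem_insert_of_mem he))

lemma BanachMeasure.empty_zero (μ : BanachMeasure G) : μ.toFun ∅ = 0 := by
  have := μ.additive ∅ ∅ (by simp)
  simp at this
  linarith

lemma BanachMeasure.mono (μ : BanachMeasure G) {A B : Set G} (h : A ⊆ B) :
    μ.toFun A ≤ μ.toFun B := by
  have h1 := μ.additive A (B \ A) Set.disjoint_sdiff_right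
  rw [Set.union_diff_cancel h] at h1
  have := μ.nonneg (B \ A)
  linarith

lemma BanachMeasure.biUnion_le (μ : BanachMeasure G) (E : Finset G) (f : G → Set G) :
    μ.toFun (⋃ e ∈ E, f e) ≤ ∑ e ∈ E, μ.toFun (f e) := by
  classical
  induction E using Finset.induction_on with
  | empty => simp [μ.empty_zero]
  | @insert a s hx ih =>
    rw [Finset.set_biUnion_insert, Finset.sum_insert hx]
    have hsub : μ.toFun (f a ∪ ⋃ e ∈ s, f e) ≤ μ.toFun (f a) + μ.toFun (⋃ e ∈ s, f e) := by
      have h1 := μ.additive (f a) ((⋃ e ∈ s, f e) \ f a) Set.disjoint_sdiff_right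
      rw [Set.union_diff_self] at h1
      have h2 := μ.mono (Set.diff_subset (s := ⋃ e ∈ s, f e) (t := f a))
      linarith
    linarith

lemma exists_banachMeasure (hG : FolnerCond G) (I : Set (Set G))
    (hI : IsInvariantIdeal G I) (W : Set G)
    (hth : ∀ J ∈ I, ∀ E : Finset G, ∃ g : G, ∀ e ∈ E, e * g ∈ W ∧ e * g ∉ J) :
    ∃ μ : BanachMeasure G, (∀ B ∈ I, μ.toFun B = 0) ∧ μ.toFun W = 1 := by
  classical
  let Λ := ({J : Set G // J ∈ I} × Finset G × ℕ)
  haveI : Nonempty Λ := ⟨⟨⟨∅, hI.empty_mem⟩, ∅, 0⟩⟩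
  haveI hdir : IsDirected Λ (· ≤ ·) := ⟨by
    rintro ⟨⟨J₁, hJ₁⟩, K₁, n₁⟩ ⟨⟨J₂, hJ₂⟩, K₂, n₂⟩
    refine ⟨⟨⟨J₁ ∪ J₂, hI.union_mem hJ₁ hJ₂⟩, K₁ ∪ K₂, max n₁ n₂⟩, ?_, ?_⟩
    · exact ⟨Subtype.mk_le_mk.2 Set.subset_union_left,
        Finset.subset_union_left, le_max_left _ _⟩
    · exact ⟨Subtype.mk_le_mk.2 Set.subset_union_right,
        Finset.subset_union_right, le_max_right _ _⟩⟩
  have hpos : ∀ n : ℕ, (0:ℝ) < 1/(n+1) := fun n => by positivity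
  choose E hEne hEfol using fun p : Λ => hG p.2.1 (1/(p.2.2+1)) (hpos _)
  choose g hg using fun p : Λ => hth p.1.1 p.1.2 (E p)
  have hEcard : ∀ p : Λ, (0:ℝ) < (E p).card := fun p => by
    exact_mod_cast Finset.card_pos.2 (hEne p)
  set ν : Λ → Set G → ℝ :=
    fun p S => (∑ e ∈ E p, ind S (e * g p)) / ((E p).card : ℝ) with hν
  have hν' : ∀ (p : Λ) (S : Set G),
      ν p S = (∑ e ∈ E p, ind S (e * g p)) / ((E p).card : ℝ) := fun p S => rfl
  have hν0 : ∀ p S, 0 ≤ ν p S := fun p S =>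
    div_nonneg (Finset.sum_nonneg fun e _ => ind_nonneg S _) (le_of_lt (hEcard p))
  have hν1 : ∀ p S, ν p S ≤ 1 := by
    intro p S
    rw [hν' p S, div_le_one (hEcard p)]
    calc ∑ e ∈ E p, ind S (e * g p) ≤ ∑ _e ∈ E p, (1:ℝ) :=
        Finset.sum_le_sum fun e _ => ind_le_one S _
      _ = (E p).card := by simp
  set U : Ultrafilter Λ := Ultrafilter.of atTop with hUdef
  have hU : (U : Filter Λ) ≤ atTop := Ultrafilter.of_le _
  have hlim : ∀ S : Set G, ∃ r ∈ Set.Icc (0:ℝ) 1, Tendsto (fun p => ν p S) U (𝓝 r) := by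
    intro S
    have hle : (U.map (fun p => ν p S) : Filter ℝ) ≤ 𝓟 (Set.Icc 0 1) := by
      rw [Ultrafilter.coe_map, Filter.le_principal_iff, Filter.mem_map]
      exact Filter.univ_mem' (fun p => ⟨hν0 p S, hν1 p S⟩)
    obtain ⟨r, hr, hler⟩ := (isCompact_Icc (a := (0:ℝ)) (b := 1)).ultrafilter_le_nhds
      (U.map (fun p => ν p S)) hle
    exact ⟨r, hr, hler⟩
  choose m hm hten using hlim
  have hν_univ : ∀ p, ν p Set.univ = 1 := by
    intro p
    rw [hν' p Set.univ]
    have : ∀ e ∈ E p, ind (Set.univ : Set G) (e * g p) = 1 :=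
      fun e _ => ind_of_mem (Set.mem_univ _)
    rw [Finset.sum_congr rfl this]
    simp only [Finset.sum_const, nsmul_eq_mul, mul_one]
    exact div_self (ne_of_gt (hEcard p))
  have hν_W : ∀ p, ν p W = 1 := by
    intro p
    rw [hν' p W]
    have : ∀ e ∈ E p, ind W (e * g p) = 1 := fun e he => ind_of_mem (hg p e he).1
    rw [Finset.sum_congr rfl this]
    simp only [Finset.sum_const, nsmul_eq_mul, mul_one]
    exact div_self (ne_of_gt (hEcard p))
  have hν_add : ∀ (p : Λ) (S T : Set G), Disjoint S T → ν p (S ∪ T) = ν p S + ν p T := by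
    intro p S T hd
    rw [hν' p (S ∪ T), hν' p S, hν' p T]
    rw [Finset.sum_congr rfl (fun e _ => ind_union hd (e * g p)), Finset.sum_add_distrib,
      add_div]
  refine ⟨⟨m, fun S => (hm S).1, fun S => (hm S).2, ?_, ?_, ?_⟩, ?_, ?_⟩
  · -- additive
    intro S T hd
    refine tendsto_nhds_unique (hten (S ∪ T)) ?_
    have h2 : Tendsto (fun p => ν p S + ν p T) U (𝓝 (m S + m T)) := (hten S).add (hten T)
    exact h2.congr (fun p => (hν_add p S T hd).symm)
  · -- univ
    refine tendsto_nhds_unique (hten Set.univ) ?_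
    exact tendsto_const_nhds.congr (fun p => (hν_univ p).symm)
  · -- invariance
    intro x S
    have key : Tendsto (fun p => ν p ((fun a => x * a) '' S) - ν p S) U (𝓝 0) := by
      rw [NormedAddCommGroup.tendsto_nhds_zero]
      intro δ hδ
      obtain ⟨n₀, hn₀⟩ := exists_nat_one_div_lt hδ
      have hmem : Set.Ici ((⟨⟨∅, hI.empty_mem⟩, {x}, n₀⟩ : Λ)) ∈ (U : Filter Λ) :=
        hU (Filter.Ici_mem_atTop _)
      refine Filter.eventually_iff_exists_mem.2 ⟨_, hmem, ?_⟩
      rintro ⟨⟨J, hJ⟩, K, n⟩ hp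
      obtain ⟨-, hxK, hn⟩ := hp
      have hxK' : x ∈ K := hxK (Finset.mem_singleton_self x)
      set q := (⟨⟨J, hJ⟩, K, n⟩ : Λ) with hq
      -- rewrite first sum as a sum over the translated Følner set
      have hsum1 : ∑ e ∈ E q, ind ((fun a => x * a) '' S) (e * g q)
          = ∑ e ∈ x⁻¹ • E q, ind S (e * g q) := by
        have h1 : ∀ e ∈ E q, ind ((fun a => x * a) '' S) (e * g q)
            = ind S ((x⁻¹ * e) * g q) := by
          intro e _
          rw [ind_image, mul_assoc]
        rw [Finset.sum_congr rfl h1]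
        have himg : (x⁻¹ • E q) = (E q).image (fun e => x⁻¹ * e) := by
          rw [Finset.smul_finset_def]; simp [smul_eq_mul]
        rw [himg, Finset.sum_image (fun a _ b _ h => mul_left_cancel h)]
      -- symmetric difference bound
      have hsd : ((symmDiff (x⁻¹ • E q) (E q)).card : ℝ) < (1/(n+1)) * (E q).card := by
        have hcardeq : (symmDiff (x⁻¹ • E q) (E q)).card = (symmDiff (E q) (x • E q)).card := by
          rw [← Finset.card_smul_finset x (symmDiff (x⁻¹ • E q) (E q)),
            Finset.smul_finset_symmDiff, smul_inv_smul]
        rw [hcardeq]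
        have hfol := hEfol q x hxK'
        have hcoe : ((fun a => x * a) '' ((E q : Set G))) = ((x • E q : Finset G) : Set G) := by
          rw [Finset.coe_smul_finset, ← Set.image_smul]
          simp [smul_eq_mul]
        rw [hcoe, ← Finset.coe_symmDiff, Set.ncard_coe_finset] at hfol
        exact hfol
      have hbound : ‖ν q ((fun a => x * a) '' S) - ν q S‖ < 1/(n+1) := by
        rw [Real.norm_eq_abs, abs_sub_lt_iff]
        have hb1 := aux_sum_sub (x⁻¹ • E q) (E q) (fun e => ind S (e * g q))
          (fun a => ind_nonneg S _) (fun a => ind_le_one S _)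
        have hb2 := aux_sum_sub (E q) (x⁻¹ • E q) (fun e => ind S (e * g q))
          (fun a => ind_nonneg S _) (fun a => ind_le_one S _)
        rw [symmDiff_comm] at hb2
        have hc := hEcard q
        constructor
        · rw [hν' q ((fun a => x * a) '' S), hν' q S, hsum1, div_sub_div_same,
            div_lt_iff₀ hc]
          calc (∑ e ∈ x⁻¹ • E q, ind S (e * g q)) - ∑ e ∈ E q, ind S (e * g q)
              ≤ ((symmDiff (x⁻¹ • E q) (E q)).card : ℝ) := hb1
            _ < (1/(n+1)) * (E q).card := hsd
        · rw [hν' q ((fun a => x * a) '' S), hν' q S, hsum1, div_sub_div_same,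
            div_lt_iff₀ hc]
          calc (∑ e ∈ E q, ind S (e * g q)) - ∑ e ∈ x⁻¹ • E q, ind S (e * g q)
              ≤ ((symmDiff (x⁻¹ • E q) (E q)).card : ℝ) := hb2
            _ < (1/(n+1)) * (E q).card := hsd
      calc ‖ν q ((fun a => x * a) '' S) - ν q S‖ < 1/(n+1) := hbound
        _ ≤ 1/(n₀+1) := by
          apply one_div_le_one_div_of_le (by positivity)
          have : (n₀ : ℝ) ≤ (n : ℝ) := by exact_mod_cast hn
          linarith
        _ < δ := hn₀
    have h1 : Tendsto (fun p => ν p ((fun a => x * a) '' S) - ν p S) U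
        (𝓝 (m ((fun a => x * a) '' S) - m S)) := (hten _).sub (hten S)
    have := tendsto_nhds_unique h1 key
    linarith
  · -- vanishing on I
    intro B hB
    refine tendsto_nhds_unique (hten B) ?_
    have hmem : Set.Ici ((⟨⟨B, hB⟩, ∅, 0⟩ : Λ)) ∈ (U : Filter Λ) := hU (Filter.Ici_mem_atTop _)
    refine Tendsto.congr' ?_ (tendsto_const_nhds (x := (0:ℝ)))
    refine Filter.eventuallyEq_of_mem hmem ?_
    rintro ⟨⟨J, hJ⟩, K, n⟩ hp
    obtain ⟨hBJ, -, -⟩ := hp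
    set q := (⟨⟨J, hJ⟩, K, n⟩ : Λ) with hq
    have hz : ∀ e ∈ E q, ind B (e * g q) = 0 := by
      intro e he
      exact ind_of_not_mem (fun hmemB => (hg q e he).2 (hBJ hmemB))
    show (0:ℝ) = ν q B
    rw [hν' q B, Finset.sum_congr rfl hz]
    simp
  · -- value 1 on W
    refine tendsto_nhds_unique (hten W) ?_
    exact tendsto_const_nhds.congr (fun p => (hν_W p).symm)
end AuxMeasure

/-- Every `S`-complete invariant ideal on an amenable group is `N`-complete: if `S_I = I`,
then every set which is `μ`-null for every Banach measure `μ` annihilating `I` lies in `I`. -/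
theorem sComplete_implies_nComplete {G : Type*} [Group G] (hG : FolnerCond G)
    (I : Set (Set G)) (hI : IsInvariantIdeal G I)
    (hS : {A : Set G | IsISmall I A} = I) :
    ∀ A : Set G,
      (∀ μ : BanachMeasure G, (∀ B ∈ I, μ.toFun B = 0) → μ.toFun A = 0) → A ∈ I := by
  classical
  intro A hnull
  by_contra hA
  have hAs : ¬ IsISmall I A := fun h => hA (hS ▸ h : A ∈ I)
  rw [IsISmall] at hAs
  push_neg at hAs
  obtain ⟨L, hL, hLA⟩ := hAs
  obtain ⟨F, hF⟩ := hL
  -- F is nonempty (otherwise univ ∈ I, contradicting properness)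
  have hFne : F.Nonempty := by
    rcases Finset.eq_empty_or_nonempty F with h | h
    · exfalso
      subst h
      simp only [Finset.coe_empty, Set.empty_mul, Set.diff_empty] at hF
      exact hI.proper (Set.eq_univ_of_forall fun S =>
        hI.subset_mem hF (Set.subset_univ S))
    · exact h
  -- thickness property for W := ↑F * A
  have hth : ∀ J ∈ I, ∀ Ef : Finset G, ∃ g : G,
      ∀ e ∈ Ef, e * g ∈ ((F : Set G) * A) ∧ e * g ∉ J := by
    intro J hJ Ef
    by_contra hcon
    push_neg at hcon
    -- hcon : ∀ g, ∃ e ∈ Ef, e * g ∈ ↑F * A → e * g ∈ J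
    set J₀ : Set G := (Set.univ \ ((F : Set G) * L)) ∪ J with hJ₀def
    have hJ₀I : J₀ ∈ I := hI.union_mem hF hJ
    apply hLA
    refine ⟨Ef⁻¹ * F, ?_⟩
    have hsub : (Set.univ : Set G) \ (((Ef⁻¹ * F : Finset G) : Set G) * (L \ A))
        ⊆ ⋃ e ∈ Ef, (fun a => e⁻¹ * a) '' J₀ := by
      intro y hy
      obtain ⟨e, he, himp⟩ := hcon y
      have hyJ₀ : e * y ∈ J₀ ∨ y ∈ (((Ef⁻¹ * F : Finset G) : Set G) * (L \ A)) := by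
        by_cases hmem : e * y ∈ (F : Set G) * L
        · obtain ⟨f, hf1, l, hl, hfl⟩ := hmem
          by_cases hlA : l ∈ A
          · left
            right
            exact himp ⟨f, hf1, l, hlA, hfl⟩
          · right
            refine ⟨e⁻¹ * f, ?_, l, ⟨hl, hlA⟩, ?_⟩
            · rw [Finset.coe_mul]
              exact Set.mul_mem_mul (by simpa using he) hf1
            · show e⁻¹ * f * l = y
              rw [mul_assoc]
              rw [show f * l = e * y from hfl]
              exact inv_mul_cancel_left e y
        · left
          left
          exact ⟨Set.mem_univ _, hmem⟩
      rcases hyJ₀ with h | h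
      · refine Set.mem_biUnion he ⟨e * y, h, ?_⟩
        exact inv_mul_cancel_left e y
      · exact absurd h hy.2
    exact hI.subset_mem
      (aux_biUnion_mem hI Ef (fun e => (fun a => e⁻¹ * a) '' J₀)
        (fun e _ => hI.translate_mem e⁻¹ hJ₀I)) hsub
  obtain ⟨μ, hμI, hμW⟩ := exists_banachMeasure hG I hI ((F : Set G) * A) hth
  have hA0 : μ.toFun A = 0 := hnull μ hμI
  have hWsub : ((F : Set G) * A) = ⋃ f ∈ F, (fun a => f * a) '' A := by
    ext y
    simp only [Set.mem_mul, Set.mem_iUnion, Set.mem_image, Finset.mem_coe]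
    constructor
    · rintro ⟨f, hf, a, ha, rfl⟩
      exact ⟨f, hf, a, ha, rfl⟩
    · rintro ⟨f, hf, a, ha, rfl⟩
      exact ⟨f, hf, a, ha, rfl⟩
  have hle : μ.toFun ((F : Set G) * A) ≤ ∑ f ∈ F, μ.toFun ((fun a => f * a) '' A) := by
    rw [hWsub]
    exact μ.biUnion_le F _
  have hsum0 : ∑ f ∈ F, μ.toFun ((fun a => f * a) '' A) = 0 := by
    refine Finset.sum_eq_zero fun f _ => ?_
    rw [μ.invariant f A, hA0]
  rw [hμW, hsum0] at hle
  linarith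
end

section
/- If a group G contains a subgroup isomorphic to the free group F_2 on two generators, then no invariant ideal on G is pack_2-complete; in particular, the ideal S of small subsets of G is not pack_2-complete. -/
open scoped Pointwise Topology

/-- An invariant ideal `I` on `G` is `pack₂`-complete if `A ∈ I` for every `A ⊆ G` such that
for each `m ∈ ℕ` there is `B ⊆ G` with `|B| = m` and `bA ∩ b'A ∈ I` for all distinct
`b, b' ∈ B`. -/
def Pack2Complete {G : Type*} [Group G] (I : Set (Set G)) : Prop :=
  ∀ A : Set G,
    (∀ m : ℕ, ∃ B : Finset G, B.card = m ∧
      ∀ b ∈ B, ∀ b' ∈ B, b ≠ b' →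
        ((fun a => b * a) '' A) ∩ ((fun a => b' * a) '' A) ∈ I) →
    A ∈ I

section FreeGroupLemmas


lemma toWord_of_mul (i : Fin 2) (g : FreeGroup (Fin 2))
    (h : g.toWord.head? ≠ some (i, false)) :
    (FreeGroup.of i * g).toWord = (i, true) :: g.toWord := by
  conv_lhs => rw [← FreeGroup.mk_toWord (x := g)]
  rw [show (FreeGroup.of i : FreeGroup (Fin 2)) = FreeGroup.mk [(i, true)] from rfl,
    FreeGroup.mul_mk, FreeGroup.toWord_mk, List.singleton_append, FreeGroup.reduce.cons,
    FreeGroup.reduce_toWord]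
  cases hW : g.toWord with
  | nil => simp
  | cons hd tl =>
    rw [hW] at h
    simp only []
    rw [if_neg]
    rintro ⟨h1, h2⟩
    apply h
    obtain ⟨a, b⟩ := hd
    simp only at h1 h2
    subst h1
    cases b
    · rfl
    · simp at h2

lemma head_pow (i : Fin 2) : ∀ (k : ℕ) (g : FreeGroup (Fin 2)),
    g.toWord.head? ≠ some (i, false) →
    ((FreeGroup.of i) ^ (k + 1) * g).toWord.head? = some (i, true) := by
  intro k
  induction k with
  | zero => intro g hg; rw [pow_one, toWord_of_mul i g hg]; rfl
  | succ n ih =>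
    intro g hg
    have h1 := ih g hg
    have : (FreeGroup.of i) ^ (n + 2) * g = FreeGroup.of i * ((FreeGroup.of i) ^ (n + 1) * g) := by
      rw [← mul_assoc, ← pow_succ']
    rw [this, toWord_of_mul i _ (by rw [h1]; simp)]
    rfl

/-- The set of reduced words starting with the first generator (in either sign). -/
def Aset : Set (FreeGroup (Fin 2)) := {g | ∃ b, g.toWord.head? = some ((0 : Fin 2), b)}

lemma memA_head_ne {g : FreeGroup (Fin 2)} (hg : g ∈ Aset) :
    g.toWord.head? ≠ some ((1 : Fin 2), false) := by
  obtain ⟨b, hb⟩ := hg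
  rw [hb]
  intro hc
  have h2 : ((0 : Fin 2), b).1 = ((1 : Fin 2), false).1 :=
    (Prod.ext_iff.1 (Option.some_injective _ hc)).1
  simp only at h2
  exact absurd h2 (by decide)

lemma notmemA_head_ne {g : FreeGroup (Fin 2)} (hg : g ∉ Aset) :
    g.toWord.head? ≠ some ((0 : Fin 2), false) := fun hc => hg ⟨false, hc⟩

lemma disjA_aux (d : ℕ) {a a' : FreeGroup (Fin 2)} (ha : a ∈ Aset) (ha' : a' ∈ Aset) :
    a ≠ (FreeGroup.of 1) ^ (d + 1) * a' := by
  intro hc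
  obtain ⟨b, hb⟩ := ha
  have := head_pow 1 d a' (memA_head_ne ha')
  rw [← hc, hb] at this
  have h2 : ((0 : Fin 2), b).1 = ((1 : Fin 2), true).1 :=
    (Prod.ext_iff.1 (Option.some_injective _ this)).1
  simp only at h2
  exact absurd h2 (by decide)

lemma disjA {i j : ℕ} (hij : i ≠ j) {a a' : FreeGroup (Fin 2)}
    (ha : a ∈ Aset) (ha' : a' ∈ Aset) :
    (FreeGroup.of 1) ^ i * a ≠ (FreeGroup.of 1) ^ j * a' := by
  intro hc
  rcases lt_or_gt_of_ne hij with hlt | hgt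
  · obtain ⟨d, rfl⟩ : ∃ d, j = i + (d + 1) := ⟨j - i - 1, by omega⟩
    rw [pow_add, mul_assoc] at hc
    exact disjA_aux d ha ha' (mul_left_cancel hc)
  · obtain ⟨d, rfl⟩ : ∃ d, i = j + (d + 1) := ⟨i - j - 1, by omega⟩
    rw [pow_add, mul_assoc] at hc
    exact disjA_aux d ha' ha (mul_left_cancel hc.symm)

lemma disjB_aux (d : ℕ) {a a' : FreeGroup (Fin 2)} (ha : a ∉ Aset) (ha' : a' ∉ Aset) :
    a ≠ (FreeGroup.of 0) ^ (d + 1) * a' := by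
  intro hc
  have := head_pow 0 d a' (notmemA_head_ne ha')
  rw [← hc] at this
  exact ha ⟨true, this⟩

lemma disjB {i j : ℕ} (hij : i ≠ j) {a a' : FreeGroup (Fin 2)}
    (ha : a ∉ Aset) (ha' : a' ∉ Aset) :
    (FreeGroup.of 0) ^ i * a ≠ (FreeGroup.of 0) ^ j * a' := by
  intro hc
  rcases lt_or_gt_of_ne hij with hlt | hgt
  · obtain ⟨d, rfl⟩ : ∃ d, j = i + (d + 1) := ⟨j - i - 1, by omega⟩
    rw [pow_add, mul_assoc] at hc
    exact disjB_aux d ha ha' (mul_left_cancel hc)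
  · obtain ⟨d, rfl⟩ : ∃ d, i = j + (d + 1) := ⟨i - j - 1, by omega⟩
    rw [pow_add, mul_assoc] at hc
    exact disjB_aux d ha' ha (mul_left_cancel hc.symm)

lemma of_pow_injective (i : Fin 2) : Function.Injective fun n : ℕ => (FreeGroup.of i) ^ n := by
  intro n m hnm
  simp only at hnm
  have : ((FreeGroup.of i) ^ n).toWord.length = ((FreeGroup.of i) ^ m).toWord.length := by
    rw [hnm]
  simpa [FreeGroup.toWord_of_pow] using this

end FreeGroupLemmas

section Packing


lemma exists_packing_pair {G : Type*} [Group G] (φ : FreeGroup (Fin 2) →* G)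
    (hφ : Function.Injective φ) :
    ∃ A : Set G,
      (∀ m : ℕ, ∃ B : Finset G, B.card = m ∧ ∀ b ∈ B, ∀ b' ∈ B, b ≠ b' →
        ((fun a => b * a) '' A) ∩ ((fun a => b' * a) '' A) = ∅) ∧
      (∀ m : ℕ, ∃ B : Finset G, B.card = m ∧ ∀ b ∈ B, ∀ b' ∈ B, b ≠ b' →
        ((fun a => b * a) '' Aᶜ) ∩ ((fun a => b' * a) '' Aᶜ) = ∅) := by
  classical
  -- the right-coset equivalence relation modulo the image of `φ`
  let s : Setoid G :=
    { r := fun g g' => ∃ u, φ u = g * g'⁻¹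
      iseqv := by
        refine ⟨fun g => ⟨1, by simp⟩, ?_, ?_⟩
        · rintro g g' ⟨u, hu⟩
          exact ⟨u⁻¹, by rw [map_inv, hu]; group⟩
        · rintro g g' g'' ⟨u, hu⟩ ⟨v, hv⟩
          exact ⟨u * v, by rw [map_mul, hu, hv]; group⟩ }
  let rep : G → G := fun g => (Quotient.mk s g).out
  have hrep : ∀ g : G, ∃ u, φ u = g * (rep g)⁻¹ := by
    intro g
    obtain ⟨u, hu⟩ : ∃ u, φ u = rep g * g⁻¹ := Quotient.mk_out (s := s) g
    exact ⟨u⁻¹, by rw [map_inv, hu]; group⟩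
  let w : G → FreeGroup (Fin 2) := fun g => (hrep g).choose
  have hw : ∀ g, φ (w g) = g * (rep g)⁻¹ := fun g => (hrep g).choose_spec
  have hrep_mul : ∀ (u : FreeGroup (Fin 2)) (g : G), rep (φ u * g) = rep g := by
    intro u g
    have : Quotient.mk s (φ u * g) = Quotient.mk s g :=
      Quotient.sound ⟨u, by group⟩
    simpa [rep] using congrArg Quotient.out this
  have hw_mul : ∀ (u : FreeGroup (Fin 2)) (g : G), w (φ u * g) = u * w g := by
    intro u g
    apply hφ
    rw [map_mul, hw, hw, hrep_mul]
    group
  refine ⟨{g : G | w g ∈ Aset}, ?_, ?_⟩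
  · intro m
    refine ⟨(Finset.range m).image (fun n => φ (FreeGroup.of 1 ^ n)), ?_, ?_⟩
    · rw [Finset.card_image_of_injective _ (fun n m hnm => of_pow_injective 1 (hφ hnm)), Finset.card_range]
    · intro b hb b' hb' hbb
      simp only [Finset.mem_image, Finset.mem_range] at hb hb'
      obtain ⟨n, -, rfl⟩ := hb
      obtain ⟨n', -, rfl⟩ := hb'
      have hnn : n ≠ n' := fun hc => hbb (by rw [hc])
      rw [Set.eq_empty_iff_forall_notMem]
      rintro z ⟨⟨a, ha, hza⟩, ⟨a', ha', hza'⟩⟩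
      simp only [] at hza hza'
      have : φ (FreeGroup.of 1 ^ n) * a = φ (FreeGroup.of 1 ^ n') * a' :=
        hza.trans hza'.symm
      have hww := congrArg w this
      rw [hw_mul, hw_mul] at hww
      exact disjA hnn ha ha' hww
  · intro m
    refine ⟨(Finset.range m).image (fun n => φ (FreeGroup.of 0 ^ n)), ?_, ?_⟩
    · rw [Finset.card_image_of_injective _ (fun n m hnm => of_pow_injective 0 (hφ hnm)), Finset.card_range]
    · intro b hb b' hb' hbb
      simp only [Finset.mem_image, Finset.mem_range] at hb hb'
      obtain ⟨n, -, rfl⟩ := hb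
      obtain ⟨n', -, rfl⟩ := hb'
      have hnn : n ≠ n' := fun hc => hbb (by rw [hc])
      rw [Set.eq_empty_iff_forall_notMem]
      rintro z ⟨⟨a, ha, hza⟩, ⟨a', ha', hza'⟩⟩
      simp only [Set.mem_compl_iff, Set.mem_setOf_eq] at ha ha'
      simp only [] at hza hza'
      have : φ (FreeGroup.of 0 ^ n) * a = φ (FreeGroup.of 0 ^ n') * a' :=
        hza.trans hza'.symm
      have hww := congrArg w this
      rw [hw_mul, hw_mul] at hww
      exact disjB hnn ha ha' hww

lemma no_pack2_of_inv_ideal {G : Type*} [Group G] (φ : FreeGroup (Fin 2) →* G)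
    (hφ : Function.Injective φ) (I : Set (Set G)) (hI : IsInvariantIdeal G I) :
    ¬ Pack2Complete I := by
  intro hP
  obtain ⟨A, h1, h2⟩ := exists_packing_pair φ hφ
  have hA : A ∈ I := by
    refine hP A fun m => ?_
    obtain ⟨B, hc, hd⟩ := h1 m
    exact ⟨B, hc, fun b hb b' hb' hbb => by
      rw [hd b hb b' hb' hbb]; exact hI.empty_mem⟩
  have hAc : Aᶜ ∈ I := by
    refine hP Aᶜ fun m => ?_
    obtain ⟨B, hc, hd⟩ := h2 m
    exact ⟨B, hc, fun b hb b' hb' hbb => by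
      rw [hd b hb b' hb' hbb]; exact hI.empty_mem⟩
  have huniv : (Set.univ : Set G) ∈ I :=
    hI.subset_mem (hI.union_mem hA hAc) (by simp)
  exact hI.proper (Set.eq_univ_of_forall fun S => hI.subset_mem huniv (Set.subset_univ S))

end Packing

section Small

variable {G : Type*} [Group G]

lemma isLarge_mono {A B : Set G} (hAB : A ⊆ B) (h : IsLarge A) : IsLarge B := by
  obtain ⟨F, hF⟩ := h
  have hsub := Set.mul_subset_mul_left (s := (F : Set G)) hAB
  rw [hF] at hsub
  exact ⟨F, hsub.antisymm' (Set.subset_univ _)⟩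

lemma isLarge_univ : IsLarge (Set.univ : Set G) := by
  refine ⟨{1}, ?_⟩
  rw [Finset.coe_singleton, Set.singleton_mul]
  simp

lemma not_isLarge_empty : ¬ IsLarge (∅ : Set G) := by
  rintro ⟨F, hF⟩
  rw [Set.mul_empty] at hF
  exact Set.empty_ne_univ hF

lemma isLarge_translate (x : G) {A : Set G} (h : IsLarge A) :
    IsLarge ((fun a => x * a) '' A) := by
  classical
  obtain ⟨F, hF⟩ := h
  refine ⟨F.image (· * x⁻¹), Set.eq_univ_of_forall fun g => ?_⟩
  have hg : g ∈ (F : Set G) * A := hF ▸ Set.mem_univ g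
  rw [Set.mem_mul] at hg
  obtain ⟨f, hf, a, ha, rfl⟩ := hg
  rw [Set.mem_mul]
  refine ⟨f * x⁻¹, by simp only [Finset.coe_image, Set.mem_image]; exact ⟨f, hf, rfl⟩, x * a, ⟨a, ha, rfl⟩, by group⟩

lemma small_ideal : IsInvariantIdeal G {A : Set G | IsSmallSet A} := by
  constructor
  · intro hc
    have h1 : IsSmallSet (Set.univ : Set G) := by
      rw [Set.eq_univ_iff_forall] at hc
      exact hc _
    have h2 := h1 Set.univ isLarge_univ
    rw [Set.diff_self] at h2
    exact not_isLarge_empty h2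
  · intro B hB
    simpa using hB
  · intro A B hA hBA L hL
    exact isLarge_mono (Set.diff_subset_diff_right hBA) (hA L hL)
  · intro A B hA hB L hL
    have h1 := hB _ (hA L hL)
    rwa [Set.diff_diff] at h1
  · intro x A hA L hL
    have h2 := isLarge_translate x (hA _ (isLarge_translate x⁻¹ hL))
    have heq : (fun a => x * a) '' (((fun a => x⁻¹ * a) '' L) \ A)
        = L \ ((fun a => x * a) '' A) := by
      rw [Set.image_diff (mul_right_injective x), ← Set.image_comp]
      congr 1
      simp [Function.comp]
    rwa [heq] at h2

end Small

/-- If a group `G` contains a subgroup isomorphic to the free group `F₂`, then no invariant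
ideal on `G` is `pack₂`-complete; in particular, the ideal `S` of small subsets of `G`
is not `pack₂`-complete. -/
theorem no_pack2_complete_ideal_of_free_subgroup {G : Type*} [Group G]
    (h : ∃ φ : FreeGroup (Fin 2) →* G, Function.Injective φ) :
    (∀ I : Set (Set G), IsInvariantIdeal G I → ¬ Pack2Complete I) ∧
    ¬ Pack2Complete {A : Set G | IsSmallSet A} := by
  obtain ⟨φ, hφ⟩ := h
  exact ⟨fun I hI => no_pack2_of_inv_ideal φ hφ I hI,
    no_pack2_of_inv_ideal φ hφ _ small_ideal⟩
end
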